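/- Let n be a natural number, and let H(q,p) = ½ ∑_{i,j} p_i M^{ij}(q) p_j + h(q) and Ĥ(q,p) = ½ ∑_{i,j} p_i M̂^{ij}(q) p_j + ĥ(q) be simple Hamiltonians on ℝⁿ × ℝⁿ (M, M̂ C¹ matrix-valued, h, ĥ C¹). Then the canonical Poisson bracket {Ĥ,H} is odd in the fiber variable: for every (q,p) ∈ ℝⁿ × ℝⁿ, {Ĥ,H}(q,−p) = −{Ĥ,H}(q,p). -/

import Mathlib

open scoped BigOperators

/-- The simple Hamiltonian `H(q,p) = ½ ∑_{i,j} pᵢ M^{ij}(q) pⱼ + h(q)` on `ℝⁿ × ℝⁿ`. -/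
noncomputable def simpleHam (n : ℕ) (M : (Fin n → ℝ) → Matrix (Fin n) (Fin n) ℝ)
    (h : (Fin n → ℝ) → ℝ) : (Fin n → ℝ) × (Fin n → ℝ) → ℝ :=
  fun x => (1 / 2) * (∑ i, ∑ j, x.2 i * M x.1 i j * x.2 j) + h x.1

/-- The canonical Poisson bracket
`{F,G}(q,p) = ∑ᵢ (∂F/∂qⁱ ∂G/∂pᵢ − ∂G/∂qⁱ ∂F/∂pᵢ)` on `ℝⁿ × ℝⁿ`. -/
noncomputable def poissonBracket (n : ℕ) (F G : (Fin n → ℝ) × (Fin n → ℝ) → ℝ)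
    (x : (Fin n → ℝ) × (Fin n → ℝ)) : ℝ :=
  ∑ i, (fderiv ℝ F x (Pi.single i 1, 0) * fderiv ℝ G x (0, Pi.single i 1)
      - fderiv ℝ G x (Pi.single i 1, 0) * fderiv ℝ F x (0, Pi.single i 1))

/-- The linear involution `(q,p) ↦ (q,-p)`. -/
noncomputable def negSnd (n : ℕ) :
    ((Fin n → ℝ) × (Fin n → ℝ)) →L[ℝ] ((Fin n → ℝ) × (Fin n → ℝ)) :=
  (ContinuousLinearMap.fst ℝ _ _).prod (-(ContinuousLinearMap.snd ℝ _ _))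

lemma simpleHam_comp_negSnd (n : ℕ) (M : (Fin n → ℝ) → Matrix (Fin n) (Fin n) ℝ)
    (h : (Fin n → ℝ) → ℝ) : simpleHam n M h ∘ (negSnd n) = simpleHam n M h := by
  funext x
  simp [simpleHam, negSnd, ContinuousLinearMap.prod_apply, Pi.neg_apply, neg_mul, mul_neg,
    neg_neg]

lemma simpleHam_diff (n : ℕ) (M : (Fin n → ℝ) → Matrix (Fin n) (Fin n) ℝ)
    (h : (Fin n → ℝ) → ℝ) (hM : ∀ i j, ContDiff ℝ 1 fun q => M q i j)
    (hh : ContDiff ℝ 1 h) : Differentiable ℝ (simpleHam n M h) := by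
  unfold simpleHam
  apply Differentiable.add
  · apply Differentiable.const_mul
    apply Differentiable.fun_sum; intro i _
    apply Differentiable.fun_sum; intro j _
    have h1 : Differentiable ℝ fun x : (Fin n → ℝ) × (Fin n → ℝ) => M x.1 i j :=
      ((hM i j).differentiable one_ne_zero).comp differentiable_fst
    have h2 : ∀ k, Differentiable ℝ fun x : (Fin n → ℝ) × (Fin n → ℝ) => x.2 k :=
      fun k => by fun_prop
    exact ((h2 i).mul h1).mul (h2 j)
  · exact ((hh.differentiable one_ne_zero).comp differentiable_fst)

lemma fderiv_negSnd (n : ℕ) (F : (Fin n → ℝ) × (Fin n → ℝ) → ℝ)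
    (hF : Differentiable ℝ F) (hsym : F ∘ (negSnd n) = F) (q p : Fin n → ℝ)
    (w : (Fin n → ℝ) × (Fin n → ℝ)) :
    fderiv ℝ F (q, -p) w = fderiv ℝ F (q, p) (negSnd n w) := by
  have hσ : negSnd n (q, -p) = (q, p) := by
    simp [negSnd]
  have hcomp : fderiv ℝ (F ∘ (negSnd n)) (q, -p)
      = (fderiv ℝ F (negSnd n (q, -p))).comp (fderiv ℝ (negSnd n) (q, -p)) :=
    fderiv_comp _ (hF _) ((negSnd n).differentiableAt)
  rw [hσ, (negSnd n).fderiv] at hcomp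
  calc fderiv ℝ F (q, -p) w = fderiv ℝ (F ∘ negSnd n) (q, -p) w := by rw [hsym]
    _ = fderiv ℝ F (q, p) (negSnd n w) := by rw [hcomp]; rfl

theorem poisson_bracket_of_simple_hamiltonians_odd
    (n : ℕ)
    (M Mhat : (Fin n → ℝ) → Matrix (Fin n) (Fin n) ℝ)
    (h hhat : (Fin n → ℝ) → ℝ)
    (hM : ∀ i j, ContDiff ℝ 1 fun q => M q i j)
    (hMhat : ∀ i j, ContDiff ℝ 1 fun q => Mhat q i j)
    (hh : ContDiff ℝ 1 h) (hhhat : ContDiff ℝ 1 hhat) :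
    ∀ (q p : Fin n → ℝ),
      poissonBracket n (simpleHam n Mhat hhat) (simpleHam n M h) (q, -p)
        = -poissonBracket n (simpleHam n Mhat hhat) (simpleHam n M h) (q, p) := by
  intro q p
  have hFd := simpleHam_diff n Mhat hhat hMhat hhhat
  have hGd := simpleHam_diff n M h hM hh
  have hFs := simpleHam_comp_negSnd n Mhat hhat
  have hGs := simpleHam_comp_negSnd n M h
  unfold poissonBracket
  rw [← Finset.sum_neg_distrib]
  apply Finset.sum_congr rfl
  intro i _
  have e1 : negSnd n ((Pi.single i 1 : Fin n → ℝ), (0 : Fin n → ℝ))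
      = ((Pi.single i 1 : Fin n → ℝ), (0 : Fin n → ℝ)) := by simp [negSnd]
  have e2 : negSnd n ((0 : Fin n → ℝ), (Pi.single i 1 : Fin n → ℝ))
      = -((0 : Fin n → ℝ), (Pi.single i 1 : Fin n → ℝ)) := by
    ext <;> simp [negSnd]
  rw [fderiv_negSnd n _ hFd hFs q p, fderiv_negSnd n _ hFd hFs q p,
    fderiv_negSnd n _ hGd hGs q p, fderiv_negSnd n _ hGd hGs q p, e1, e2, map_neg, map_neg]
  ring
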